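/- Let p be an odd prime, let k be an integer and let (k_m)_{m≥1} be a sequence of integers with k_m ≡ k (mod (p−1)p^m) and k_m ≠ k for every m ≥ 1. Set a = (1+p)^k − 1 ∈ ℚ_p and a_m = (1+p)^{k_m} − 1 ∈ ℚ_p (powers of the unit 1+p with integer exponents). If f : ℚ_p → ℚ_p is analytic at the point a and f(a_m) = 0 for all m ≥ 1, then f vanishes identically on some neighbourhood of a (that is, f is eventually 0 with respect to the neighbourhood filter of a). -/

import Mathlib

open Filter

section aux

variable {p : ℕ} [Fact p.Prime]

lemma my_norm_one_add_p : ‖(1 + p : ℚ_[p])‖ = 1 := by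
  have hp : (1:ℝ) < p := by exact_mod_cast (Fact.out : p.Prime).one_lt
  rw [Padic.add_eq_max_of_ne]
  · rw [norm_one, Padic.norm_p]
    exact max_eq_left (by rw [inv_le_one₀ (by linarith)]; linarith)
  · rw [norm_one, Padic.norm_p]
    intro h
    rw [eq_comm, inv_eq_one] at h
    exact absurd h (by linarith)

lemma my_one_add_p_ne_zero : (1 + p : ℚ_[p]) ≠ 0 := by
  intro h
  have := my_norm_one_add_p (p := p)
  rw [h, norm_zero] at this
  norm_num at this

lemma my_padicValNat_le (hodd : Odd p) {i : ℕ} (hi : 2 ≤ i) : padicValNat p i ≤ i - 2 := by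
  have hp2 := (Fact.out : p.Prime).two_le
  have hp3 : 3 ≤ p := by
    have : p ≠ 2 := by rintro rfl; exact (by decide : ¬ Odd 2) hodd
    omega
  by_contra hv
  push_neg at hv
  have h1 : i - 1 ≤ padicValNat p i := by omega
  have hd : p ^ (i - 1) ∣ i := dvd_trans (pow_dvd_pow p h1) (pow_padicValNat_dvd)
  have hle : p ^ (i - 1) ≤ i := Nat.le_of_dvd (by omega) hd
  have h2 : i ≤ 2 ^ (i - 1) := by
    have := Nat.lt_two_pow_self (n := i - 1)
    omega
  have h3 : 2 ^ (i - 1) < p ^ (i - 1) :=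
    Nat.pow_lt_pow_left (by omega) (by omega)
  omega

lemma my_norm_nat_ge (hodd : Odd p) {i : ℕ} (hi : 2 ≤ i) :
    (p : ℝ) ^ (-(i:ℤ) + 2) ≤ ‖(i : ℚ_[p])‖ := by
  have hp : (1:ℝ) < p := by exact_mod_cast (Fact.out : p.Prime).one_lt
  have hi0 : (i : ℚ_[p]) ≠ 0 := by exact_mod_cast (by omega : i ≠ 0)
  rw [Padic.norm_eq_zpow_neg_valuation hi0, Padic.valuation_natCast]
  apply zpow_le_zpow_right₀ (le_of_lt hp)
  have := my_padicValNat_le hodd hi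
  omega

-- key: ‖(1+p)^n - 1‖ = ‖n‖ * p⁻¹ for naturals
lemma my_norm_pow_sub_one (hodd : Odd p) (n : ℕ) :
    ‖((1 + p : ℚ_[p]) ^ n - 1)‖ = ‖(n : ℚ_[p])‖ * (p : ℝ)⁻¹ := by
  have hp : (1:ℝ) < p := by exact_mod_cast (Fact.out : p.Prime).one_lt
  rcases Nat.eq_zero_or_pos n with rfl | hn
  · simp
  have expand : (1 + p : ℚ_[p]) ^ n =
      ∑ i ∈ Finset.range (n+1), (p:ℚ_[p]) ^ i * (n.choose i) := by
    rw [add_comm, add_pow]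
    simp
  have hsplit : (1 + p : ℚ_[p]) ^ n - 1 =
      (n : ℚ_[p]) * p + ∑ i ∈ Finset.Ico 2 (n+1), (p:ℚ_[p]) ^ i * (n.choose i) := by
    rw [expand, Finset.range_eq_Ico,
      ← Finset.sum_Ico_consecutive _ (by omega : 0 ≤ 2) (by omega : 2 ≤ n+1)]
    have : ∑ i ∈ Finset.Ico 0 2, (p:ℚ_[p]) ^ i * (n.choose i) = 1 + p * n := by
      rw [show Finset.Ico 0 2 = {0, 1} by rfl]
      simp [Finset.sum_insert, Finset.mem_singleton]
    rw [this]
    ring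
  have hterm : ∀ i ∈ Finset.Ico 2 (n+1),
      ‖(p:ℚ_[p]) ^ i * (n.choose i)‖ ≤ ‖(n : ℚ_[p])‖ * (p:ℝ)⁻¹ ^ 2 := by
    intro i hi
    rw [Finset.mem_Ico] at hi
    obtain ⟨hi2, hin⟩ := hi
    rw [norm_mul, norm_pow, Padic.norm_p, mul_comm]
    -- ‖choose n i‖ * ‖i‖ ≤ ‖n‖
    have hch : ‖((n.choose i) : ℚ_[p])‖ * ‖(i : ℚ_[p])‖ ≤ ‖(n : ℚ_[p])‖ := by
      have hid : (n.choose i) * i = n * ((n-1).choose (i-1)) := by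
        have := Nat.add_one_mul_choose_eq (n-1) (i-1)
        rw [show n-1+1 = n by omega, show i-1+1 = i by omega] at this
        omega
      calc ‖((n.choose i) : ℚ_[p])‖ * ‖(i : ℚ_[p])‖
          = ‖((n.choose i * i : ℕ) : ℚ_[p])‖ := by rw [Nat.cast_mul, norm_mul]
        _ = ‖(n : ℚ_[p])‖ * ‖(((n-1).choose (i-1) : ℕ) : ℚ_[p])‖ := by
            rw [hid, Nat.cast_mul, norm_mul]
        _ ≤ ‖(n : ℚ_[p])‖ * 1 := by
            apply mul_le_mul_of_nonneg_left _ (norm_nonneg _)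
            exact_mod_cast Padic.norm_int_le_one ((n-1).choose (i-1) : ℤ)
        _ = ‖(n : ℚ_[p])‖ := mul_one _
    have hipos : (0:ℝ) < ‖(i : ℚ_[p])‖ := by
      apply norm_pos_iff.mpr
      exact_mod_cast (by omega : i ≠ 0)
    have hnormi := my_norm_nat_ge hodd hi2
    have hppos : (0:ℝ) < p := by linarith
    -- ‖choose‖ ≤ ‖n‖ / ‖i‖ and p⁻¹^i / (p^(-i+2)) = p⁻¹^2
    have hch2 : ‖((n.choose i) : ℚ_[p])‖ ≤ ‖(n : ℚ_[p])‖ / ‖(i : ℚ_[p])‖ :=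
      (le_div_iff₀ hipos).mpr hch
    calc ‖((n.choose i) : ℚ_[p])‖ * (p:ℝ)⁻¹ ^ i
        ≤ (‖(n : ℚ_[p])‖ / ‖(i : ℚ_[p])‖) * (p:ℝ)⁻¹ ^ i := by
          apply mul_le_mul_of_nonneg_right hch2 (by positivity)
      _ ≤ (‖(n : ℚ_[p])‖ / (p : ℝ) ^ (-(i:ℤ) + 2)) * (p:ℝ)⁻¹ ^ i := by
          apply mul_le_mul_of_nonneg_right _ (by positivity)
          apply div_le_div_of_nonneg_left (norm_nonneg _) _ hnormi
          positivity
      _ = ‖(n : ℚ_[p])‖ * (p:ℝ)⁻¹ ^ 2 := by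
          rw [div_mul_eq_mul_div, mul_div_assoc]
          congr 1
          rw [← zpow_natCast ((p:ℝ)⁻¹) i, ← zpow_natCast ((p:ℝ)⁻¹) 2,
            inv_zpow, inv_zpow, ← zpow_neg, ← zpow_neg, div_eq_mul_inv, ← zpow_neg,
            ← zpow_add₀ (by positivity : (p:ℝ) ≠ 0)]
          congr 1
          omega
  have hsum : ‖∑ i ∈ Finset.Ico 2 (n+1), (p:ℚ_[p]) ^ i * (n.choose i)‖ ≤
      ‖(n : ℚ_[p])‖ * (p:ℝ)⁻¹ ^ 2 := by
    apply IsUltrametricDist.norm_sum_le_of_forall_le_of_nonneg _ hterm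
    positivity
  have hn0 : (n : ℚ_[p]) ≠ 0 := by exact_mod_cast (by omega : n ≠ 0)
  have hnpos : (0:ℝ) < ‖(n : ℚ_[p])‖ := norm_pos_iff.mpr hn0
  have hlt : ‖∑ i ∈ Finset.Ico 2 (n+1), (p:ℚ_[p]) ^ i * (n.choose i)‖ <
      ‖(n : ℚ_[p]) * p‖ := by
    rw [norm_mul, Padic.norm_p]
    refine lt_of_le_of_lt hsum ?_
    have : (p:ℝ)⁻¹ ^ 2 < (p:ℝ)⁻¹ := by
      rw [sq]
      nlinarith [inv_pos.mpr (by linarith : (0:ℝ) < p), (inv_lt_one₀ (by linarith)).mpr hp]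
    nlinarith
  rw [hsplit, Padic.add_eq_max_of_ne (ne_of_gt hlt).symm.symm, max_eq_left (le_of_lt hlt),
    norm_mul, Padic.norm_p]

lemma my_norm_zpow_sub_one (hodd : Odd p) (n : ℤ) :
    ‖((1 + p : ℚ_[p]) ^ n - 1)‖ = ‖(n : ℚ_[p])‖ * (p : ℝ)⁻¹ := by
  rcases le_or_gt 0 n with hn | hn
  · lift n to ℕ using hn
    rw [zpow_natCast]
    exact_mod_cast my_norm_pow_sub_one hodd n
  · obtain ⟨m, rfl⟩ : ∃ m : ℕ, n = -m := ⟨n.natAbs, by omega⟩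
    have h0 := my_one_add_p_ne_zero (p := p)
    have : (1 + p : ℚ_[p]) ^ (-(m:ℤ)) - 1 =
        ((1 + p : ℚ_[p]) ^ (m:ℤ))⁻¹ * (1 - (1 + p : ℚ_[p]) ^ (m:ℤ)) := by
      rw [zpow_neg]
      field_simp
    rw [this, norm_mul, norm_inv, zpow_natCast, norm_pow, my_norm_one_add_p (p := p),
      one_pow, inv_one, one_mul, ← norm_neg, neg_sub, my_norm_pow_sub_one hodd m]
    congr 1
    push_cast
    rw [norm_neg]

end aux

set_option maxHeartbeats 1000000 in
/-- Let `p` be an odd prime, `k : ℤ` and `(k_m)_{m ≥ 1}` integers with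
`k_m ≡ k [MOD (p-1)p^m]` and `k_m ≠ k`. Set `a = (1+p)^k - 1` and `a_m = (1+p)^{k_m} - 1`
in `ℚ_p`. If `f : ℚ_p → ℚ_p` is analytic at `a` and vanishes at every `a_m`, then `f`
vanishes identically on a neighbourhood of `a`. -/
theorem analytic_vanishing_at_accumulating_weights (p : ℕ) [Fact p.Prime] (hodd : Odd p)
    (k : ℤ) (km : ℕ → ℤ)
    (hkm : ∀ m : ℕ, 1 ≤ m → ((p - 1 : ℤ) * p ^ m) ∣ km m - k)
    (hne : ∀ m : ℕ, 1 ≤ m → km m ≠ k)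
    (f : ℚ_[p] → ℚ_[p])
    (hf : AnalyticAt ℚ_[p] f ((1 + p : ℚ_[p]) ^ k - 1))
    (hzero : ∀ m : ℕ, 1 ≤ m → f ((1 + p : ℚ_[p]) ^ km m - 1) = 0) :
    f =ᶠ[nhds ((1 + p : ℚ_[p]) ^ k - 1)] 0 := by
  have hp : (1:ℝ) < p := by exact_mod_cast (Fact.out : p.Prime).one_lt
  have h0 := my_one_add_p_ne_zero (p := p)
  set a : ℚ_[p] := (1 + p : ℚ_[p]) ^ k - 1 with ha
  set x : ℕ → ℚ_[p] := fun m => (1 + p : ℚ_[p]) ^ km m - 1 with hx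
  -- norm of difference
  have hdiff : ∀ m : ℕ, 1 ≤ m →
      ‖x m - a‖ = ‖((km m - k : ℤ) : ℚ_[p])‖ * (p:ℝ)⁻¹ := by
    intro m hm
    have : x m - a = (1 + p : ℚ_[p]) ^ k * ((1 + p : ℚ_[p]) ^ (km m - k) - 1) := by
      rw [hx, ha, mul_sub, mul_one, ← zpow_add₀ h0, show k + (km m - k) = km m by ring]
      ring
    rw [this, norm_mul, norm_zpow, my_norm_one_add_p (p := p), one_zpow, one_mul,
      my_norm_zpow_sub_one hodd]
  -- distinct from a
  have hxa : ∀ m : ℕ, 1 ≤ m → x m ≠ a := by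
    intro m hm h
    have := hdiff m hm
    rw [h, sub_self, norm_zero] at this
    have h1 : ((km m - k : ℤ) : ℚ_[p]) ≠ 0 := by
      exact_mod_cast sub_ne_zero.mpr (hne m hm)
    have h2 : (0:ℝ) < ‖((km m - k : ℤ) : ℚ_[p])‖ * (p:ℝ)⁻¹ := by
      apply mul_pos (norm_pos_iff.mpr h1)
      positivity
    linarith [this ▸ h2]
  -- convergence
  have hbound : ∀ m : ℕ, ‖x (m + 1) - a‖ ≤ (p:ℝ)⁻¹ ^ (m + 2) := by
    intro m
    rw [hdiff (m+1) (by omega)]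
    have hdvd : ((p:ℤ) ^ (m+1)) ∣ km (m+1) - k :=
      dvd_trans (dvd_mul_left _ _) (hkm (m+1) (by omega))
    have hb := (Padic.norm_int_le_pow_iff_dvd (km (m+1) - k) (m+1)).mpr hdvd
    calc ‖((km (m+1) - k : ℤ) : ℚ_[p])‖ * (p:ℝ)⁻¹
        ≤ (p:ℝ) ^ (-((m+1:ℕ)):ℤ) * (p:ℝ)⁻¹ := by
          apply mul_le_mul_of_nonneg_right hb
          positivity
      _ = (p:ℝ)⁻¹ ^ (m + 2) := by
          rw [zpow_neg, zpow_natCast, ← inv_pow, ← pow_succ]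
  have hlim : Tendsto (fun m : ℕ => (p:ℝ)⁻¹ ^ (m + 2)) atTop (nhds 0) := by
    have h1 : Tendsto (fun n : ℕ => (p:ℝ)⁻¹ ^ n) atTop (nhds 0) :=
      tendsto_pow_atTop_nhds_zero_of_lt_one (inv_nonneg.mpr (by linarith))
        ((inv_lt_one₀ (by linarith)).mpr hp)
    exact h1.comp (tendsto_add_atTop_nat 2)
  have htend : Tendsto (fun m => x (m + 1)) atTop (nhds a) := by
    rw [tendsto_iff_norm_sub_tendsto_zero]
    exact squeeze_zero (fun m => norm_nonneg _) hbound hlim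
  -- conclude
  rcases hf.eventually_eq_zero_or_eventually_ne_zero with h | h
  · exact h
  · exfalso
    have htend' : Tendsto (fun m => x (m + 1)) atTop (nhdsWithin a {a}ᶜ) := by
      apply tendsto_nhdsWithin_of_tendsto_nhds_of_eventually_within _ htend
      exact Eventually.of_forall (fun m => hxa (m+1) (by omega))
    have := htend'.eventually h
    rcases this.exists with ⟨m, hm⟩
    exact hm (hzero (m+1) (by omega))
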